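/- For every 0 ≤ ε ≤ 1, Δ(ε) = inf{ g/n : n and g are integers with n ≥ g ≥ 1 and R(g,n) ≥ n·ε }. -/

import Mathlib

open MeasureTheory

/-- A set `C ⊆ ℝ` is symmetric if it is invariant under some reflection `x ↦ 2c − x`. -/
def IsSymmetricSet (C : Set ℝ) : Prop :=
  ∃ c : ℝ, ∀ x : ℝ, x ∈ C ↔ 2 * c - x ∈ C

/-- `symD A` is the supremum of measures of symmetric measurable subsets of `A`. -/
noncomputable def symD (A : Set ℝ) : ℝ :=
  sSup {m : ℝ | ∃ C : Set ℝ, C ⊆ A ∧ MeasurableSet C ∧ IsSymmetricSet C ∧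
    m = (volume C).toReal}

/-- `Delta ε` is the infimum of `symD A` over measurable `A ⊆ [0,1)` with `λ(A) = ε`. -/
noncomputable def Delta (ε : ℝ) : ℝ :=
  sInf {d : ℝ | ∃ A : Set ℝ, A ⊆ Set.Ico (0:ℝ) 1 ∧ MeasurableSet A ∧
    volume A = ENNReal.ofReal ε ∧ d = symD A}


/-- A finite set `S` of integers is a `B*[g]` set if every integer `m` has at most `g`
representations as an ordered sum `s₁ + s₂` with `s₁, s₂ ∈ S`. -/
def IsBstar (g : ℕ) (S : Finset ℤ) : Prop :=
  ∀ m : ℤ, ((S ×ˢ S).filter (fun p => p.1 + p.2 = m)).card ≤ g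

/-- `R g n` is the maximal size of a `B*[g]` set contained in `{1, …, n}`. -/
noncomputable def R (g n : ℕ) : ℕ :=
  sSup {k : ℕ | ∃ S : Finset ℤ, S ⊆ Finset.Icc 1 (n : ℤ) ∧ IsBstar g S ∧ S.card = k}


-- ## Auxiliary lemmas

-- basic symD facts
lemma zero_mem_symDset (A : Set ℝ) :
    (0:ℝ) ∈ {m : ℝ | ∃ C : Set ℝ, C ⊆ A ∧ MeasurableSet C ∧ IsSymmetricSet C ∧
      m = (volume C).toReal} :=
  ⟨∅, Set.empty_subset A, MeasurableSet.empty, ⟨0, fun x => by simp⟩, by simp⟩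

lemma symDset_bddAbove (A : Set ℝ) (hA : A ⊆ Set.Ico (0:ℝ) 1) :
    BddAbove {m : ℝ | ∃ C : Set ℝ, C ⊆ A ∧ MeasurableSet C ∧ IsSymmetricSet C ∧
      m = (volume C).toReal} := by
  refine ⟨1, fun m hm => ?_⟩
  obtain ⟨C, hCA, -, -, rfl⟩ := hm
  have h1 : volume C ≤ volume (Set.Ico (0:ℝ) 1) :=
    measure_mono (hCA.trans hA)
  have h2 : volume (Set.Ico (0:ℝ) 1) = 1 := by simp
  calc (volume C).toReal ≤ (volume (Set.Ico (0:ℝ) 1)).toReal := by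
        apply ENNReal.toReal_mono (by simp [h2]) h1
    _ = 1 := by simp [h2]

lemma symD_nonneg (A : Set ℝ) (hA : A ⊆ Set.Ico (0:ℝ) 1) : 0 ≤ symD A :=
  le_csSup (symDset_bddAbove A hA) (zero_mem_symDset A)

lemma symD_le (A : Set ℝ) {b : ℝ}
    (hb : ∀ C : Set ℝ, C ⊆ A → MeasurableSet C → IsSymmetricSet C →
      (volume C).toReal ≤ b) : symD A ≤ b := by
  apply csSup_le ⟨0, zero_mem_symDset A⟩
  rintro m ⟨C, hCA, hCm, hCs, rfl⟩
  exact hb C hCA hCm hCs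

lemma symD_ge (A : Set ℝ) (hA : A ⊆ Set.Ico (0:ℝ) 1) (C : Set ℝ)
    (hCA : C ⊆ A) (hCm : MeasurableSet C) (hCs : IsSymmetricSet C) :
    (volume C).toReal ≤ symD A :=
  le_csSup (symDset_bddAbove A hA) ⟨C, hCA, hCm, hCs, rfl⟩

-- R facts
lemma R_ge (g n : ℕ) (S : Finset ℤ) (hS : S ⊆ Finset.Icc 1 (n:ℤ))
    (hB : IsBstar g S) : S.card ≤ R g n := by
  apply le_csSup
  · refine ⟨n, fun k hk => ?_⟩
    obtain ⟨T, hT, -, rfl⟩ := hk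
    calc T.card ≤ (Finset.Icc (1:ℤ) n).card := Finset.card_le_card hT
      _ = n := by rw [Int.card_Icc]; simp
  · exact ⟨S, hS, hB, rfl⟩

lemma R_exists (g n : ℕ) : ∃ S : Finset ℤ, S ⊆ Finset.Icc 1 (n:ℤ) ∧ IsBstar g S ∧
    S.card = R g n := by
  have hne : {k : ℕ | ∃ S : Finset ℤ, S ⊆ Finset.Icc 1 (n : ℤ) ∧ IsBstar g S ∧ S.card = k}.Nonempty :=
    ⟨0, ∅, by simp, fun m => by simp, rfl⟩
  have hbdd : BddAbove {k : ℕ | ∃ S : Finset ℤ, S ⊆ Finset.Icc 1 (n : ℤ) ∧ IsBstar g S ∧ S.card = k} := by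
    refine ⟨n, fun k hk => ?_⟩
    obtain ⟨T, hT, -, rfl⟩ := hk
    calc T.card ≤ (Finset.Icc (1:ℤ) n).card := Finset.card_le_card hT
      _ = n := by rw [Int.card_Icc]; simp
  have := Nat.sSup_mem hne hbdd
  exact this

lemma R_one_one : R 1 1 = 1 := by
  apply le_antisymm
  · obtain ⟨S, hS, -, hcard⟩ := R_exists 1 1
    rw [← hcard]
    calc S.card ≤ (Finset.Icc (1:ℤ) 1).card := Finset.card_le_card hS
      _ = 1 := by simp
  · have := R_ge 1 1 {1} (by simp)
      (fun m => le_trans (Finset.card_filter_le _ _) (by simp))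
    simpa using this


noncomputable def tent (n : ℕ) (u : ℝ) (m : ℤ) : ℝ :=
  max 0 (min (m:ℝ) (u+1) - max ((m:ℝ)-1) u) / n

lemma piece_real (n : ℕ) (hn : 0 < n) (c : ℝ) (s t : ℤ) :
    min ((s:ℝ)/n) (2*c - ((t:ℝ)-1)/n) - max (((s:ℝ)-1)/n) (2*c - (t:ℝ)/n) ≤
      tent n (2*c*n) (s+t) := by
  have hnR : (0:ℝ) < n := by exact_mod_cast hn
  set u : ℝ := 2*c*n with hu
  have hq : 2*c - ((t:ℝ)-1)/n = (u - t + 1)/n := by field_simp [hu]; ring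
  have hp : 2*c - (t:ℝ)/n = (u - t)/n := by field_simp [hu]; rw [hu]
  rw [hq, hp, min_div_div_right hnR.le, max_div_div_right hnR.le]
  have e1 : min ((s:ℝ)) (u - t + 1) = min ((s:ℝ)+t) (u+1) - t := by
    rw [← min_sub_sub_right]
    congr 1 <;> ring
  have e2 : max (((s:ℝ))-1) (u - t) = max ((s:ℝ)+t-1) u - t := by
    rw [← max_sub_sub_right]
    congr 1 <;> ring
  rw [e1, e2, tent]
  push_cast
  rw [div_sub_div_same]
  have h3 : min ((s:ℝ)+t) (u+1) - t - (max ((s:ℝ)+t-1) u - t) =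
      min ((s:ℝ)+t) (u+1) - max ((s:ℝ)+t-1) u := by ring
  rw [h3]
  gcongr
  exact le_max_right _ _

lemma tent_nonneg (n : ℕ) (u : ℝ) (m : ℤ) : 0 ≤ tent n u m :=
  div_nonneg (le_max_left _ _) (Nat.cast_nonneg n)

lemma sum_tent (n : ℕ) (hn : 0 < n) (g : ℕ) (S : Finset ℤ) (hB : IsBstar g S) (u : ℝ) :
    ∑ p ∈ S ×ˢ S, tent n u (p.1+p.2) ≤ (g:ℝ) / n := by
  have hnR : (0:ℝ) < n := by exact_mod_cast hn
  set m1 : ℤ := ⌊u⌋ + 1 with hm1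
  have hfloor_le : ((⌊u⌋:ℤ):ℝ) ≤ u := Int.floor_le u
  have hlt : u < ((⌊u⌋:ℤ):ℝ) + 1 := Int.lt_floor_add_one u
  have hm1cast : ((m1:ℤ):ℝ) = ((⌊u⌋:ℤ):ℝ) + 1 := by rw [hm1]; push_cast; ring
  have hzero : ∀ m : ℤ, m ≠ m1 → m ≠ m1 + 1 → tent n u m = 0 := by
    intro m hne1 hne2
    have : min ((m:ℤ):ℝ) (u+1) - max (((m:ℤ):ℝ)-1) u ≤ 0 := by
      rcases lt_or_ge m m1 with h | h
      · have hm : m ≤ ⌊u⌋ := by omega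
        have hmu : ((m:ℤ):ℝ) ≤ u := le_trans (by exact_mod_cast hm) hfloor_le
        have h1 : min ((m:ℤ):ℝ) (u+1) ≤ u := le_trans (min_le_left _ _) hmu
        linarith [le_max_right (((m:ℤ):ℝ)-1) u]
      · have hm : (⌊u⌋:ℤ) + 3 ≤ m := by omega
        have hmu : ((⌊u⌋:ℤ):ℝ) + 3 ≤ (m:ℝ) := by exact_mod_cast hm
        have h1 : u + 1 ≤ ((m:ℤ):ℝ) - 1 := by linarith
        linarith [min_le_right ((m:ℤ):ℝ) (u+1), le_max_left (((m:ℤ):ℝ)-1) u]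
    rw [tent, max_eq_left this, zero_div]
  have hb1 : tent n u m1 ≤ (((⌊u⌋:ℤ):ℝ) + 1 - u) / n := by
    rw [tent]
    gcongr
    apply max_le (by linarith)
    calc min ((m1:ℤ):ℝ) (u+1) - max (((m1:ℤ):ℝ)-1) u ≤ ((m1:ℤ):ℝ) - u := by
          have := min_le_left ((m1:ℤ):ℝ) (u+1)
          have := le_max_right (((m1:ℤ):ℝ)-1) u
          linarith
      _ = ((⌊u⌋:ℤ):ℝ) + 1 - u := by rw [hm1cast]
  have hb2 : tent n u (m1+1) ≤ (u - ((⌊u⌋:ℤ):ℝ)) / n := by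
    rw [tent]
    gcongr
    apply max_le (by linarith)
    have h1 : min (((m1+1:ℤ)):ℝ) (u+1) ≤ u + 1 := min_le_right _ _
    have h2 : ((⌊u⌋:ℤ):ℝ) + 1 ≤ max ((((m1+1:ℤ)):ℝ)-1) u := by
      apply le_max_of_le_left
      push_cast [hm1]
      linarith
    linarith
  calc ∑ p ∈ S ×ˢ S, tent n u (p.1+p.2)
      ≤ ∑ p ∈ S ×ˢ S, ((if p.1+p.2 = m1 then tent n u m1 else 0) +
          (if p.1+p.2 = m1+1 then tent n u (m1+1) else 0)) := by
        apply Finset.sum_le_sum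
        intro p hp
        by_cases h1 : p.1+p.2 = m1
        · rw [h1, if_pos rfl, if_neg (by omega)]
          simp
        · by_cases h2 : p.1+p.2 = m1+1
          · rw [h2, if_neg (by omega), if_pos rfl]
            simp
          · rw [hzero _ h1 h2, if_neg h1, if_neg h2]
            norm_num
    _ = (((S ×ˢ S).filter (fun p => p.1+p.2 = m1)).card : ℝ) * tent n u m1 +
        (((S ×ˢ S).filter (fun p => p.1+p.2 = m1+1)).card : ℝ) * tent n u (m1+1) := by
        rw [Finset.sum_add_distrib, ← Finset.sum_filter, ← Finset.sum_filter,
          Finset.sum_const, Finset.sum_const, nsmul_eq_mul, nsmul_eq_mul]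
    _ ≤ (g:ℝ) * tent n u m1 + (g:ℝ) * tent n u (m1+1) := by
        apply add_le_add
        · exact mul_le_mul_of_nonneg_right (by exact_mod_cast hB m1) (tent_nonneg _ _ _)
        · exact mul_le_mul_of_nonneg_right (by exact_mod_cast hB (m1+1)) (tent_nonneg _ _ _)
    _ ≤ (g:ℝ) * ((((⌊u⌋:ℤ):ℝ) + 1 - u) / n) + (g:ℝ) * ((u - ((⌊u⌋:ℤ):ℝ)) / n) := by
        apply add_le_add
        · exact mul_le_mul_of_nonneg_left hb1 (Nat.cast_nonneg g)
        · exact mul_le_mul_of_nonneg_left hb2 (Nat.cast_nonneg g)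
    _ = (g:ℝ) / n := by
        rw [← mul_add, ← add_div,
          show (((⌊u⌋:ℤ):ℝ) + 1 - u) + (u - ((⌊u⌋:ℤ):ℝ)) = 1 from by ring, mul_one_div]


lemma keyA (n : ℕ) (hn : 0 < n) (g : ℕ) (S : Finset ℤ) (hB : IsBstar g S)
    (C : Set ℝ) (hC : C ⊆ ⋃ s ∈ S, Set.Ico (((s:ℝ)-1)/n) ((s:ℝ)/n))
    (hsym : IsSymmetricSet C) :
    volume C ≤ ENNReal.ofReal ((g:ℝ)/n) := by
  obtain ⟨c, hc⟩ := hsym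
  have hcover : C ⊆ ⋃ p ∈ S ×ˢ S,
      (Set.Ico (((p.1:ℝ)-1)/n) ((p.1:ℝ)/n) ∩
        Set.Ioc (2*c - (p.2:ℝ)/n) (2*c - ((p.2:ℝ)-1)/n)) := by
    intro x hx
    obtain ⟨s, hs, hxs⟩ := Set.mem_iUnion₂.1 (hC hx)
    have hx2 : 2 * c - x ∈ C := (hc x).1 hx
    obtain ⟨t, ht, hxt⟩ := Set.mem_iUnion₂.1 (hC hx2)
    simp only [Finset.mem_coe, Set.mem_Ico] at hxs hxt
    refine Set.mem_iUnion₂.2 ⟨(s, t), Finset.mem_product.2 ⟨hs, ht⟩, ?_⟩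
    refine ⟨hxs, ?_, ?_⟩
    · simp only; linarith [hxt.2]
    · simp only; linarith [hxt.1]
  calc volume C ≤ ∑ p ∈ S ×ˢ S, volume
        (Set.Ico (((p.1:ℝ)-1)/n) ((p.1:ℝ)/n) ∩
          Set.Ioc (2*c - (p.2:ℝ)/n) (2*c - ((p.2:ℝ)-1)/n)) :=
      le_trans (measure_mono hcover) (measure_biUnion_finset_le _ _)
    _ ≤ ∑ p ∈ S ×ˢ S, ENNReal.ofReal (tent n (2*c*n) (p.1+p.2)) := by
        apply Finset.sum_le_sum
        rintro ⟨s, t⟩ hp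
        have hsub : Set.Ico (((s:ℝ)-1)/n) ((s:ℝ)/n) ∩
            Set.Ioc (2*c - (t:ℝ)/n) (2*c - ((t:ℝ)-1)/n) ⊆
            Set.Icc (max (((s:ℝ)-1)/n) (2*c - (t:ℝ)/n))
              (min ((s:ℝ)/n) (2*c - ((t:ℝ)-1)/n)) := by
          rintro x ⟨⟨h1, h2⟩, h3, h4⟩
          exact ⟨max_le h1 h3.le, le_min h2.le h4⟩
        calc volume _ ≤ volume (Set.Icc (max (((s:ℝ)-1)/n) (2*c - (t:ℝ)/n))
              (min ((s:ℝ)/n) (2*c - ((t:ℝ)-1)/n))) := measure_mono hsub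
          _ = ENNReal.ofReal (min ((s:ℝ)/n) (2*c - ((t:ℝ)-1)/n) -
                max (((s:ℝ)-1)/n) (2*c - (t:ℝ)/n)) := Real.volume_Icc
          _ ≤ ENNReal.ofReal (tent n (2*c*n) (s+t)) :=
            ENNReal.ofReal_le_ofReal (piece_real n hn c s t)
    _ = ENNReal.ofReal (∑ p ∈ S ×ˢ S, tent n (2*c*n) (p.1+p.2)) := by
        rw [ENNReal.ofReal_sum_of_nonneg]
        intro p hp
        exact div_nonneg (le_max_left _ _) (Nat.cast_nonneg n)
    _ ≤ ENNReal.ofReal ((g:ℝ)/n) :=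
        ENNReal.ofReal_le_ofReal (sum_tent n hn g S hB (2*c*n))


lemma lemmaA (ε : ℝ) (h0 : 0 ≤ ε) (h1 : ε ≤ 1) (g n : ℕ) (hg : 1 ≤ g) (hgn : g ≤ n)
    (hR : (n : ℝ) * ε ≤ (R g n : ℝ)) :
    ∃ A : Set ℝ, A ⊆ Set.Ico (0:ℝ) 1 ∧ MeasurableSet A ∧
      volume A = ENNReal.ofReal ε ∧ symD A ≤ (g : ℝ) / n := by
  have hn : 0 < n := lt_of_lt_of_le hg hgn
  have hnR : (0:ℝ) < n := by exact_mod_cast hn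
  obtain ⟨S, hSsub, hSB, hScard⟩ := R_exists g n
  set A0 : Set ℝ := ⋃ s ∈ S, Set.Ico (((s:ℝ)-1)/n) ((s:ℝ)/n) with hA0
  have hA0m : MeasurableSet A0 :=
    MeasurableSet.biUnion S.countable_toSet (fun s _ => measurableSet_Ico)
  have hA0sub : A0 ⊆ Set.Ico 0 1 := by
    intro x hx
    obtain ⟨s, hs, hxs⟩ := Set.mem_iUnion₂.1 hx
    have hs' := Finset.mem_Icc.1 (hSsub hs)
    have h1s : (1:ℝ) ≤ (s:ℝ) := by exact_mod_cast hs'.1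
    have hsn : (s:ℝ) ≤ (n:ℝ) := by exact_mod_cast hs'.2
    constructor
    · exact le_trans (div_nonneg (by linarith) hnR.le) hxs.1
    · exact lt_of_lt_of_le hxs.2 ((div_le_one hnR).2 hsn)
  have hA0vol : volume A0 = (S.card : ENNReal) * ENNReal.ofReal (1/n) := by
    rw [hA0, measure_biUnion_finset ?_ (fun s _ => measurableSet_Ico)]
    · rw [Finset.sum_congr rfl (fun s _ => ?_), Finset.sum_const, nsmul_eq_mul]
      rw [Real.volume_Ico, show (s:ℝ)/n - ((s:ℝ)-1)/n = 1/n from by field_simp; ring]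
    · intro s hs t ht hst
      simp only [Set.disjoint_left] -- fallback
      intro x hxs hxt
      have h1 := hxs.1; have h2 := hxs.2; have h3 := hxt.1; have h4 := hxt.2
      rcases lt_or_gt_of_ne (show (s:ℤ) ≠ t from hst) with h | h
      · have : (s:ℝ) ≤ (t:ℝ) - 1 := by
          have h' : (s:ℤ) ≤ t - 1 := by omega
          exact_mod_cast h'
        have : (s:ℝ)/n ≤ ((t:ℝ)-1)/n := by gcongr
        linarith
      · have : (t:ℝ) ≤ (s:ℝ) - 1 := by
          have h' : (t:ℤ) ≤ s - 1 := by omega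
          exact_mod_cast h'
        have : (t:ℝ)/n ≤ ((s:ℝ)-1)/n := by gcongr
        linarith
  have hA0fin : volume A0 < ⊤ := by
    calc volume A0 ≤ volume (Set.Ico (0:ℝ) 1) := measure_mono hA0sub
      _ < ⊤ := by simp
  have hfin : ∀ t : ℝ, volume (A0 ∩ Set.Icc 0 t) ≠ ⊤ :=
    fun t => (lt_of_le_of_lt (measure_mono Set.inter_subset_left) hA0fin).ne
  set f : ℝ → ℝ := fun t => (volume (A0 ∩ Set.Icc 0 t)).toReal with hf
  have hmono : Monotone f := by
    intro a b hab
    exact ENNReal.toReal_mono (hfin b)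
      (measure_mono (Set.inter_subset_inter_right _ (Set.Icc_subset_Icc_right hab)))
  have key : ∀ a b : ℝ, a ≤ b → f b - f a ≤ b - a := by
    intro a b hab
    have hsub : A0 ∩ Set.Icc 0 b ⊆ (A0 ∩ Set.Icc 0 a) ∪ Set.Ioc a b := by
      rintro x ⟨hx1, hx2, hx3⟩
      rcases le_total x a with h | h
      · exact Or.inl ⟨hx1, hx2, h⟩
      · rcases eq_or_lt_of_le h with rfl | h'
        · exact Or.inl ⟨hx1, hx2, le_refl _⟩
        · exact Or.inr ⟨h', hx3⟩
    have hv : volume (A0 ∩ Set.Icc 0 b) ≤ volume (A0 ∩ Set.Icc 0 a) + volume (Set.Ioc a b) :=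
      le_trans (measure_mono hsub) (measure_union_le _ _)
    have hIoc : volume (Set.Ioc a b) = ENNReal.ofReal (b - a) := Real.volume_Ioc
    have : f b ≤ f a + (b - a) := by
      rw [hf]
      calc (volume (A0 ∩ Set.Icc 0 b)).toReal
          ≤ (volume (A0 ∩ Set.Icc 0 a) + volume (Set.Ioc a b)).toReal := by
            apply ENNReal.toReal_mono ?_ hv
            rw [hIoc]
            exact ENNReal.add_ne_top.2 ⟨hfin a, ENNReal.ofReal_ne_top⟩
        _ = f a + (b - a) := by
            rw [ENNReal.toReal_add (hfin a) (by rw [hIoc]; exact ENNReal.ofReal_ne_top),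
              hIoc, ENNReal.toReal_ofReal (by linarith)]
    linarith
  have hcont : Continuous f := by
    have : LipschitzWith 1 f := by
      apply LipschitzWith.of_dist_le_mul
      intro x y
      rw [Real.dist_eq, Real.dist_eq]
      simp only [NNReal.coe_one, one_mul]
      rcases le_total x y with h | h
      · rw [abs_sub_comm, abs_of_nonneg (sub_nonneg.2 (hmono h)),
          abs_sub_comm x y, abs_of_nonneg (sub_nonneg.2 h)]
        exact key x y h
      · rw [abs_of_nonneg (sub_nonneg.2 (hmono h)), abs_of_nonneg (sub_nonneg.2 h)]
        exact key y x h
    exact this.continuous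
  have hf0 : f 0 = 0 := by
    rw [hf]
    simp only [Set.Icc_self]
    have : volume (A0 ∩ {(0:ℝ)}) = 0 :=
      le_antisymm (le_trans (measure_mono Set.inter_subset_right) (by simp)) (by simp)
    rw [this]; simp
  have hf1 : ε ≤ f 1 := by
    have hA01 : A0 ∩ Set.Icc 0 1 = A0 :=
      Set.inter_eq_left.2 (hA0sub.trans Set.Ico_subset_Icc_self)
    rw [hf]
    simp only [hA01]
    rw [hA0vol, ENNReal.toReal_mul, ENNReal.toReal_ofReal (by positivity)]
    have hcr : ((S.card : ENNReal)).toReal = (S.card : ℝ) := by simp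
    rw [hcr, hScard, mul_one_div, le_div_iff₀ hnR]
    calc ε * n = n * ε := by ring
      _ ≤ (R g n : ℝ) := hR
  have hIVT := intermediate_value_Icc (zero_le_one (α := ℝ)) hcont.continuousOn
  have hε : ε ∈ Set.Icc (f 0) (f 1) := ⟨by rw [hf0]; exact h0, hf1⟩
  obtain ⟨t, ht, hft⟩ := hIVT hε
  refine ⟨A0 ∩ Set.Icc 0 t, ?_, hA0m.inter measurableSet_Icc, ?_, ?_⟩
  · exact Set.inter_subset_left.trans hA0sub
  · rw [← hft, hf, ENNReal.ofReal_toReal (hfin t)]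
  · apply symD_le
    intro C hCA hCm hCs
    have hCsub : C ⊆ A0 := hCA.trans Set.inter_subset_left
    have := keyA n hn g S hSB C hCsub hCs
    exact ENNReal.toReal_le_of_le_ofReal (by positivity) this


lemma grid_vol_Ico (n : ℕ) (hn : 0 < n) (S : Finset ℤ) :
    volume (⋃ s ∈ S, Set.Ico (((s:ℝ)-1)/n) ((s:ℝ)/n)) = (S.card : ENNReal) * ENNReal.ofReal (1/n) := by
  have hnR : (0:ℝ) < n := by exact_mod_cast hn
  rw [measure_biUnion_finset ?_ (fun s _ => measurableSet_Ico)]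
  · rw [Finset.sum_congr rfl (fun s _ => ?_), Finset.sum_const, nsmul_eq_mul]
    rw [Real.volume_Ico, show (s:ℝ)/n - ((s:ℝ)-1)/n = 1/n from by field_simp; ring]
  · intro s hs t ht hst
    simp only [Set.disjoint_left]
    intro x hxs hxt
    have h2 := hxs.2; have h3 := hxt.1; have h4 := hxt.2; have h1 := hxs.1
    rcases lt_or_gt_of_ne (show (s:ℤ) ≠ t from hst) with h | h
    · have hst' : (s:ℝ) ≤ (t:ℝ) - 1 := by
        have h' : (s:ℤ) ≤ t - 1 := by omega
        exact_mod_cast h'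
      have : (s:ℝ)/n ≤ ((t:ℝ)-1)/n := by gcongr
      linarith
    · have hst' : (t:ℝ) ≤ (s:ℝ) - 1 := by
        have h' : (t:ℤ) ≤ s - 1 := by omega
        exact_mod_cast h'
      have : (t:ℝ)/n ≤ ((s:ℝ)-1)/n := by gcongr
      linarith

lemma grid_vol_Ioo (n : ℕ) (hn : 0 < n) (S : Finset ℤ) :
    volume (⋃ s ∈ S, Set.Ioo (((s:ℝ)-1)/n) ((s:ℝ)/n)) = (S.card : ENNReal) * ENNReal.ofReal (1/n) := by
  have hnR : (0:ℝ) < n := by exact_mod_cast hn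
  rw [measure_biUnion_finset ?_ (fun s _ => measurableSet_Ioo)]
  · rw [Finset.sum_congr rfl (fun s _ => ?_), Finset.sum_const, nsmul_eq_mul]
    rw [Real.volume_Ioo, show (s:ℝ)/n - ((s:ℝ)-1)/n = 1/n from by field_simp; ring]
  · intro s hs t ht hst
    simp only [Set.disjoint_left]
    intro x hxs hxt
    have h2 := hxs.2; have h3 := hxt.1; have h4 := hxt.2; have h1 := hxs.1
    rcases lt_or_gt_of_ne (show (s:ℤ) ≠ t from hst) with h | h
    · have hst' : (s:ℝ) ≤ (t:ℝ) - 1 := by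
        have h' : (s:ℤ) ≤ t - 1 := by omega
        exact_mod_cast h'
      have : (s:ℝ)/n ≤ ((t:ℝ)-1)/n := by gcongr
      linarith
    · have hst' : (t:ℝ) ≤ (s:ℝ) - 1 := by
        have h' : (t:ℤ) ≤ s - 1 := by omega
        exact_mod_cast h'
      have : (t:ℝ)/n ≤ ((s:ℝ)-1)/n := by gcongr
      linarith

lemma pair_count (A : Set ℝ) (hA : A ⊆ Set.Ico (0:ℝ) 1) (hAm : MeasurableSet A)
    (σ : ℝ) (hσ : 0 ≤ σ) (n : ℕ) (hn : 0 < n) (S : Finset ℤ)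
    (hFA : volume ((⋃ s ∈ S, Set.Ico (((s:ℝ)-1)/n) ((s:ℝ)/n)) \ A) ≤ ENNReal.ofReal σ)
    (m : ℤ) :
    (((S ×ˢ S).filter (fun p => p.1 + p.2 = m)).card : ℝ) ≤ n * (symD A + 2*σ) := by
  classical
  have hnR : (0:ℝ) < n := by exact_mod_cast hn
  set F : Set ℝ := ⋃ s ∈ S, Set.Ico (((s:ℝ)-1)/n) ((s:ℝ)/n) with hF
  set Sm : Finset ℤ := S.filter (fun s => m - s ∈ S) with hSm
  -- card identification
  have hcard : ((S ×ˢ S).filter (fun p => p.1 + p.2 = m)).card = Sm.card := by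
    apply Finset.card_bij' (fun p _ => p.1) (fun s _ => (s, m - s))
    · rintro ⟨a, b⟩ hp
      simp only [Finset.mem_filter, Finset.mem_product] at hp
      simp only [hSm, Finset.mem_filter]
      exact ⟨hp.1.1, by rw [show m - a = b from by omega]; exact hp.1.2⟩
    · intro s hs
      simp only [hSm, Finset.mem_filter] at hs
      simp only [Finset.mem_filter, Finset.mem_product]
      exact ⟨⟨hs.1, hs.2⟩, by ring⟩
    · rintro ⟨a, b⟩ hp
      simp only [Finset.mem_filter, Finset.mem_product] at hp
      have : m - a = b := by omega
      simp [this]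
    · intro s hs; simp
  set c : ℝ := ((m:ℝ) - 1)/(2*n) with hc
  have h2c : 2*c = ((m:ℝ)-1)/n := by rw [hc]; field_simp
  set C : Set ℝ := ⋃ s ∈ Sm, Set.Ioo (((s:ℝ)-1)/n) ((s:ℝ)/n) with hC
  have hCF : C ⊆ F := by
    refine Set.iUnion₂_subset fun s hs => ?_
    refine Set.Ioo_subset_Ico_self.trans ?_
    have hsS : s ∈ S := by
      have h' := hs
      simp only [hSm, Finset.mem_filter] at h'
      exact h'.1
    intro x hx
    exact Set.mem_iUnion₂.2 ⟨s, hsS, hx⟩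
  have hrefl : ∀ x, x ∈ C → 2*c - x ∈ C := by
    intro x hx
    obtain ⟨s, hs, hxs⟩ := Set.mem_iUnion₂.1 hx
    have hs' : s ∈ Sm := hs
    simp only [hSm, Finset.mem_filter] at hs'
    refine Set.mem_iUnion₂.2 ⟨m - s, ?_, ?_⟩
    · simp only [hSm, Finset.mem_filter]
      refine ⟨hs'.2, ?_⟩
      rw [show m - (m - s) = s from by ring]
      exact hs'.1
    · have e1 : 2*c - (s:ℝ)/n = (((m - s : ℤ):ℝ) - 1)/n := by
        rw [h2c]; push_cast; ring
      have e2 : 2*c - ((s:ℝ)-1)/n = (((m - s:ℤ):ℝ))/n := by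
        rw [h2c]; push_cast; ring
      exact ⟨by rw [← e1]; linarith [hxs.2], by rw [← e2]; linarith [hxs.1]⟩
  have hCsym : IsSymmetricSet C := by
    refine ⟨c, fun x => ⟨hrefl x, fun h => ?_⟩⟩
    have := hrefl _ h
    rwa [show 2*c - (2*c - x) = x from by ring] at this
  have hCm : MeasurableSet C :=
    MeasurableSet.biUnion Sm.countable_toSet (fun s _ => measurableSet_Ioo)
  have hCvol : volume C = (Sm.card : ENNReal) * ENNReal.ofReal (1/n) := grid_vol_Ioo n hn Sm
  -- transfer to a symmetric subset of A
  set C' : Set ℝ := (C ∩ A) ∩ (fun x => 2*c - x) ⁻¹' (C ∩ A) with hC'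
  have hC'm : MeasurableSet C' :=
    (hCm.inter hAm).inter ((hCm.inter hAm).preimage (measurable_const.sub measurable_id))
  have hC'A : C' ⊆ A := fun x hx => hx.1.2
  have hC'sym : IsSymmetricSet C' := by
    refine ⟨c, fun x => ?_⟩
    constructor
    · rintro ⟨h1, h2⟩
      exact ⟨h2, by rw [Set.mem_preimage, show 2*c - (2*c - x) = x from by ring]; exact h1⟩
    · rintro ⟨h1, h2⟩
      rw [Set.mem_preimage, show 2*c - (2*c - x) = x from by ring] at h2
      exact ⟨h2, h1⟩
  have hdiff : C \ C' ⊆ (C \ A) ∪ (fun x => 2*c - x) ⁻¹' (C \ A) := by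
    rintro x ⟨hxC, hx'⟩
    by_cases hxA : x ∈ A
    · right
      rw [Set.mem_preimage]
      refine ⟨hrefl x hxC, fun h2A => ?_⟩
      exact hx' ⟨⟨hxC, hxA⟩, by rw [Set.mem_preimage]; exact ⟨hrefl x hxC, h2A⟩⟩
    · exact Or.inl ⟨hxC, hxA⟩
  have hreflvol : volume ((fun x => 2*c - x) ⁻¹' (C \ A)) = volume (C \ A) :=
    (Measure.measurePreserving_sub_left volume (2*c)).measure_preimage
      (hCm.diff hAm).nullMeasurableSet
  have hCAF : volume (C \ A) ≤ ENNReal.ofReal σ :=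
    le_trans (measure_mono (Set.diff_subset_diff_left hCF)) hFA
  have hCbound : volume C ≤ volume C' + 2 * ENNReal.ofReal σ := by
    calc volume C ≤ volume (C' ∪ (C \ C')) := measure_mono (by
          intro x hx
          by_cases h : x ∈ C'
          · exact Or.inl h
          · exact Or.inr ⟨hx, h⟩)
      _ ≤ volume C' + volume (C \ C') := measure_union_le _ _
      _ ≤ volume C' + (volume (C \ A) + volume ((fun x => 2*c - x) ⁻¹' (C \ A))) := by
          gcongr
          exact le_trans (measure_mono hdiff) (measure_union_le _ _)
      _ ≤ volume C' + 2 * ENNReal.ofReal σ := by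
          rw [hreflvol, two_mul]
          exact add_le_add le_rfl (add_le_add hCAF hCAF)
  -- finiteness
  have hC'fin : volume C' ≠ ⊤ := by
    refine ne_of_lt (lt_of_le_of_lt (measure_mono (hC'A.trans hA)) ?_)
    rw [Real.volume_Ico]; exact ENNReal.ofReal_lt_top
  -- to reals
  have hreal : (Sm.card : ℝ) * (1/n) ≤ (volume C').toReal + 2*σ := by
    have h1 : (volume C).toReal ≤ (volume C' + 2 * ENNReal.ofReal σ).toReal := by
      apply ENNReal.toReal_mono ?_ hCbound
      exact ENNReal.add_ne_top.2 ⟨hC'fin, ENNReal.mul_ne_top ENNReal.ofNat_ne_top ENNReal.ofReal_ne_top⟩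
    rw [hCvol] at h1
    rw [ENNReal.toReal_mul, ENNReal.toReal_ofReal (by positivity)] at h1
    rw [show ((Sm.card : ENNReal)).toReal = (Sm.card : ℝ) from rfl] at h1
    rw [ENNReal.toReal_add hC'fin (ENNReal.mul_ne_top ENNReal.ofNat_ne_top ENNReal.ofReal_ne_top), ENNReal.toReal_mul,
      ENNReal.toReal_ofReal hσ] at h1
    simpa using h1
  have hsymge : (volume C').toReal ≤ symD A := symD_ge A hA C' hC'A hC'm hC'sym
  rw [hcard]
  calc (Sm.card : ℝ) = n * ((Sm.card : ℝ) * (1/n)) := by field_simp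
    _ ≤ n * ((volume C').toReal + 2*σ) := by
        apply mul_le_mul_of_nonneg_left hreal hnR.le
    _ ≤ n * (symD A + 2*σ) := by
        apply mul_le_mul_of_nonneg_left (by linarith) hnR.le


lemma approx (A : Set ℝ) (hA : A ⊆ Set.Ico (0:ℝ) 1) (hAm : MeasurableSet A)
    (σ : ℝ) (hσ : 0 < σ) :
    ∃ k : ℕ, ∀ n : ℕ, 0 < n → ∃ S : Finset ℤ, S ⊆ Finset.Icc 1 (n:ℤ) ∧
      volume (A \ (⋃ s ∈ S, Set.Ico (((s:ℝ)-1)/n) ((s:ℝ)/n)))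
        ≤ ENNReal.ofReal σ + (k : ENNReal) * ENNReal.ofReal (2/n) ∧
      volume ((⋃ s ∈ S, Set.Ico (((s:ℝ)-1)/n) ((s:ℝ)/n)) \ A) ≤ ENNReal.ofReal σ := by
  classical
  have hAfin : volume A ≠ ⊤ := by
    refine ne_of_lt (lt_of_le_of_lt (measure_mono hA) ?_)
    rw [Real.volume_Ico]; exact ENNReal.ofReal_lt_top
  -- outer approximation
  obtain ⟨U, hAU, hUopen, hUvol⟩ :=
    Set.exists_isOpen_lt_of_lt A (volume A + ENNReal.ofReal σ)
      (ENNReal.lt_add_right hAfin (by simp [hσ]))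
  -- inner approximation
  obtain ⟨K, hKA, hKcomp, hKvol⟩ :=
    hAm.exists_isCompact_lt_add hAfin (by simp [hσ] : ENNReal.ofReal σ ≠ 0)
  -- finite ball cover of K inside U
  have hUK : ∀ x ∈ K, ∃ ρ : ℝ, 0 < ρ ∧ Metric.ball x ρ ⊆ U :=
    fun x hx => Metric.isOpen_iff.1 hUopen x (hAU (hKA hx))
  choose! ρ hρpos hρball using hUK
  obtain ⟨T, hTK, hTcov⟩ := hKcomp.elim_nhds_subcover (fun x => Metric.ball x (ρ x))
    (fun x hx => Metric.ball_mem_nhds x (hρpos x hx))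
  refine ⟨T.card, fun n hn => ?_⟩
  have hnR : (0:ℝ) < n := by exact_mod_cast hn
  set F0 : Set ℝ := ⋃ x ∈ T, Metric.ball x (ρ x) with hF0
  have hF0U : F0 ⊆ U := by
    refine Set.iUnion₂_subset fun x hx => hρball x (hTK x hx)
  set S : Finset ℤ := (Finset.Icc 1 (n:ℤ)).filter
    (fun s => Set.Ico (((s:ℝ)-1)/n) ((s:ℝ)/n) ⊆ F0) with hS
  set F : Set ℝ := ⋃ s ∈ S, Set.Ico (((s:ℝ)-1)/n) ((s:ℝ)/n) with hF
  refine ⟨S, Finset.filter_subset _ _, ?_, ?_⟩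
  · -- volume (A \ F) small
    have hsplit : A \ F ⊆ (A \ K) ∪ (K \ F) := by
      intro x hx
      by_cases hxK : x ∈ K
      · exact Or.inr ⟨hxK, hx.2⟩
      · exact Or.inl ⟨hx.1, hxK⟩
    have hAK : volume (A \ K) ≤ ENNReal.ofReal σ := by
      rw [measure_diff hKA hKcomp.measurableSet.nullMeasurableSet
        (lt_of_le_of_lt (measure_mono hKA) hAfin.lt_top).ne]
      exact tsub_le_iff_left.2 hKvol.le
    have hKF : K \ F ⊆ ⋃ x ∈ T, (Metric.closedBall x (ρ x) \ Metric.ball x (ρ x - 1/n)) := by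
      rintro y ⟨hyK, hyF⟩
      obtain ⟨x, hxT, hyx⟩ := Set.mem_iUnion₂.1 (hTcov hyK)
      have hyA := hKA hyK
      have hy01 := hA hyA
      set s : ℤ := ⌊y * n⌋ + 1 with hs_def
      have hfl_nonneg : 0 ≤ ⌊y * n⌋ := Int.floor_nonneg.2 (mul_nonneg hy01.1 hnR.le)
      have hfl_lt : ⌊y * n⌋ < (n:ℤ) := Int.floor_lt.2 (by
        calc y * n < 1 * n := by
              apply mul_lt_mul_of_pos_right hy01.2 hnR
          _ = ((n:ℤ):ℝ) := by push_cast; ring)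
      have hs_mem : s ∈ Finset.Icc 1 (n:ℤ) := Finset.mem_Icc.2 ⟨by omega, by omega⟩
      have hyI : y ∈ Set.Ico (((s:ℝ)-1)/n) ((s:ℝ)/n) := by
        constructor
        · rw [div_le_iff₀ hnR]
          have : ((⌊y * n⌋ : ℤ):ℝ) ≤ y * n := Int.floor_le _
          push_cast [hs_def]
          linarith
        · rw [lt_div_iff₀ hnR]
          have : y * n < ((⌊y * n⌋ : ℤ):ℝ) + 1 := Int.lt_floor_add_one _
          push_cast [hs_def]
          linarith
      have hsnotS : ¬ (Set.Ico (((s:ℝ)-1)/n) ((s:ℝ)/n) ⊆ F0) := by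
        intro hsub
        exact hyF (Set.mem_iUnion₂.2 ⟨s, Finset.mem_filter.2 ⟨hs_mem, hsub⟩, hyI⟩)
      obtain ⟨z, hzI, hzF0⟩ := Set.not_subset.1 hsnotS
      have hzball : z ∉ Metric.ball x (ρ x) := by
        intro hz
        exact hzF0 (Set.mem_iUnion₂.2 ⟨x, hxT, hz⟩)
      have hdzy : |z - y| < 1/n := by
        rw [abs_sub_lt_iff]
        have h1 := hyI.1; have h2 := hyI.2
        have h3 := hzI.1; have h4 := hzI.2
        constructor
        · have : ((s:ℝ))/n - ((s:ℝ)-1)/n = 1/n := by field_simp; ring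
          linarith
        · have : ((s:ℝ))/n - ((s:ℝ)-1)/n = 1/n := by field_simp; ring
          linarith
      refine Set.mem_iUnion₂.2 ⟨x, hxT, ?_, ?_⟩
      · exact Metric.mem_closedBall.2 (le_of_lt (Metric.mem_ball.1 hyx))
      · rw [Metric.mem_ball]
        push_neg
        rw [Metric.mem_ball, Real.dist_eq] at hyx
        rw [Real.dist_eq]
        have hzx : ρ x ≤ |z - x| := by
          by_contra hc
          push_neg at hc
          exact hzball (Metric.mem_ball.2 (by rwa [Real.dist_eq]))
        have : |z - x| ≤ |z - y| + |y - x| := by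
          calc |z - x| = |(z - y) + (y - x)| := by ring_nf
            _ ≤ |z - y| + |y - x| := abs_add_le _ _
        linarith
    have hring : ∀ x : ℝ, volume (Metric.closedBall x (ρ x) \ Metric.ball x (ρ x - 1/n))
        ≤ ENNReal.ofReal (2/n) := by
      intro x
      rcases le_total (ρ x) (1/n) with h | h
      · calc volume (Metric.closedBall x (ρ x) \ Metric.ball x (ρ x - 1/n))
            ≤ volume (Metric.closedBall x (ρ x)) := measure_mono Set.diff_subset
          _ = ENNReal.ofReal (2 * ρ x) := Real.volume_closedBall x (ρ x)
          _ ≤ ENNReal.ofReal (2/n) := ENNReal.ofReal_le_ofReal (by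
              have h2n : 2/(n:ℝ) = 2*(1/n) := by ring
              rw [h2n]; linarith)
      · have h1n : (0:ℝ) < 1/n := one_div_pos.2 hnR
        rw [measure_diff (Metric.ball_subset_closedBall.trans
            (Metric.closedBall_subset_closedBall (by linarith)))
            measurableSet_ball.nullMeasurableSet
            (by rw [Real.volume_ball]; exact ENNReal.ofReal_ne_top),
          Real.volume_closedBall, Real.volume_ball,
          ← ENNReal.ofReal_sub _ (by nlinarith : (0:ℝ) ≤ 2*(ρ x - 1/n))]
        exact ENNReal.ofReal_le_ofReal (by
          have h2n : 2/(n:ℝ) = 2*(1/n) := by ring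
          rw [h2n]; linarith)
    calc volume (A \ F) ≤ volume ((A \ K) ∪ (K \ F)) := measure_mono hsplit
      _ ≤ volume (A \ K) + volume (K \ F) := measure_union_le _ _
      _ ≤ ENNReal.ofReal σ + (T.card : ENNReal) * ENNReal.ofReal (2/n) := by
          apply add_le_add hAK
          calc volume (K \ F)
              ≤ volume (⋃ x ∈ T, (Metric.closedBall x (ρ x) \ Metric.ball x (ρ x - 1/n))) :=
                measure_mono hKF
            _ ≤ ∑ x ∈ T, volume (Metric.closedBall x (ρ x) \ Metric.ball x (ρ x - 1/n)) :=
                measure_biUnion_finset_le _ _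
            _ ≤ ∑ _x ∈ T, ENNReal.ofReal (2/n) := Finset.sum_le_sum (fun x _ => hring x)
            _ = (T.card : ENNReal) * ENNReal.ofReal (2/n) := by
                rw [Finset.sum_const, nsmul_eq_mul]
  · -- volume (F \ A) ≤ σ
    have hFU : F ⊆ U := by
      rw [hF]
      refine Set.iUnion₂_subset fun s hs => ?_
      have := (Finset.mem_filter.1 hs).2
      exact this.trans hF0U
    have hUA : volume (U \ A) ≤ ENNReal.ofReal σ := by
      rw [measure_diff hAU hAm.nullMeasurableSet hAfin]
      exact tsub_le_iff_left.2 hUvol.le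
    exact le_trans (measure_mono (Set.diff_subset_diff_left hFU)) hUA


lemma lemmaB (ε : ℝ) (h0 : 0 ≤ ε) (h1 : ε ≤ 1) (A : Set ℝ) (hA : A ⊆ Set.Ico (0:ℝ) 1)
    (hAm : MeasurableSet A) (hAv : volume A = ENNReal.ofReal ε) (δ : ℝ) (hδ : 0 < δ) :
    ∃ g n : ℕ, 1 ≤ g ∧ g ≤ n ∧ (n : ℝ) * ε ≤ (R g n : ℝ) ∧
      (g : ℝ) / n ≤ symD A + δ := by
  classical
  by_cases hbig : 1 ≤ symD A + δ
  · refine ⟨1, 1, le_rfl, le_rfl, ?_, ?_⟩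
    · rw [R_one_one]; simpa using h1
    · norm_num; exact hbig
  push_neg at hbig
  have hsymD0 : 0 ≤ symD A := symD_nonneg A hA
  set σ : ℝ := δ/8 with hσdef
  have hσ : 0 < σ := by positivity
  obtain ⟨k, hk⟩ := approx A hA hAm σ hσ
  obtain ⟨n, hnge⟩ := exists_nat_ge (max 1 ((8*(k:ℝ)+8)/δ))
  have hn1 : (1:ℝ) ≤ n := le_trans (le_max_left _ _) hnge
  have hnk : (8*(k:ℝ)+8)/δ ≤ n := le_trans (le_max_right _ _) hnge
  have hnR : (0:ℝ) < n := lt_of_lt_of_le one_pos hn1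
  have hn : 0 < n := by exact_mod_cast hnR
  have hnd : 8*(k:ℝ)+8 ≤ (n:ℝ)*δ := by
    rw [div_le_iff₀ hδ] at hnk; linarith
  obtain ⟨S, hSsub, hAF, hFA⟩ := hk n hn
  -- lower bound on S.card
  have hScard_le : S.card ≤ n := by
    calc S.card ≤ (Finset.Icc (1:ℤ) n).card := Finset.card_le_card hSsub
      _ = n := by rw [Int.card_Icc]; simp
  have hc5 : (n:ℝ)*ε - (n:ℝ)*σ - 2*(k:ℝ) ≤ (S.card : ℝ) := by
    have hcover : A ⊆ (⋃ s ∈ S, Set.Ico (((s:ℝ)-1)/n) ((s:ℝ)/n)) ∪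
        (A \ (⋃ s ∈ S, Set.Ico (((s:ℝ)-1)/n) ((s:ℝ)/n))) := by
      intro x hx
      by_cases h : x ∈ ⋃ s ∈ S, Set.Ico (((s:ℝ)-1)/n) ((s:ℝ)/n)
      · exact Or.inl h
      · exact Or.inr ⟨hx, h⟩
    have h1' : ENNReal.ofReal ε ≤ ENNReal.ofReal ((S.card:ℝ)/n + (σ + 2*(k:ℝ)/n)) := by
      calc ENNReal.ofReal ε = volume A := hAv.symm
        _ ≤ volume ((⋃ s ∈ S, Set.Ico (((s:ℝ)-1)/n) ((s:ℝ)/n)) ∪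
            (A \ (⋃ s ∈ S, Set.Ico (((s:ℝ)-1)/n) ((s:ℝ)/n)))) := measure_mono hcover
        _ ≤ volume (⋃ s ∈ S, Set.Ico (((s:ℝ)-1)/n) ((s:ℝ)/n)) +
            volume (A \ (⋃ s ∈ S, Set.Ico (((s:ℝ)-1)/n) ((s:ℝ)/n))) := measure_union_le _ _
        _ ≤ ENNReal.ofReal ((S.card:ℝ)/n) +
            (ENNReal.ofReal σ + (k : ENNReal) * ENNReal.ofReal (2/n)) := by
            apply add_le_add ?_ hAF
            rw [grid_vol_Ico n hn S, ← ENNReal.ofReal_natCast S.card,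
              ← ENNReal.ofReal_mul (by positivity)]
            apply le_of_eq
            congr 1
            field_simp
        _ = ENNReal.ofReal ((S.card:ℝ)/n) + (ENNReal.ofReal σ + ENNReal.ofReal (2*(k:ℝ)/n)) := by
            congr 1
            rw [← ENNReal.ofReal_natCast k, ← ENNReal.ofReal_mul (by positivity)]
            congr 2
            ring
        _ = ENNReal.ofReal ((S.card:ℝ)/n + (σ + 2*(k:ℝ)/n)) := by
            rw [← ENNReal.ofReal_add (by positivity) (by positivity),
              ← ENNReal.ofReal_add (by positivity) (by positivity)]
    have h2' : ε ≤ (S.card:ℝ)/n + (σ + 2*(k:ℝ)/n) :=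
      (ENNReal.ofReal_le_ofReal_iff (by positivity)).1 h1'
    have h3' : (n:ℝ) * ((S.card:ℝ)/n + (σ + 2*(k:ℝ)/n)) = S.card + n*σ + 2*k := by
      field_simp
      ring
    nlinarith [mul_le_mul_of_nonneg_left h2' hnR.le]
  have hc6 : ∀ m : ℤ, (((S ×ˢ S).filter (fun p => p.1 + p.2 = m)).card : ℝ)
      ≤ n * (symD A + 2*σ) := fun m => pair_count A hA hAm σ hσ.le n hn S hFA m
  -- extras
  set e : ℕ := ⌈(n:ℝ)*ε⌉₊ - S.card with he
  have hceil_le_n : ⌈(n:ℝ)*ε⌉₊ ≤ n :=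
    Nat.ceil_le.2 (by nlinarith)
  have hsdcard : ((Finset.Icc 1 (n:ℤ)) \ S).card = n - S.card := by
    rw [Finset.card_sdiff_of_subset hSsub, Int.card_Icc]
    simp
  obtain ⟨E, hE, hEcard⟩ := Finset.exists_subset_card_eq
    (show e ≤ ((Finset.Icc 1 (n:ℤ)) \ S).card from by rw [hsdcard]; omega)
  have hdisj : Disjoint S E :=
    (Finset.disjoint_of_subset_right hE Finset.sdiff_disjoint.symm)
  set S' : Finset ℤ := S ∪ E with hS'
  have hS'card : S'.card = S.card + e := by
    rw [hS', Finset.card_union_of_disjoint hdisj, hEcard]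
  have hS'sub : S' ⊆ Finset.Icc 1 (n:ℤ) :=
    Finset.union_subset hSsub (hE.trans (Finset.sdiff_subset))
  set g : ℕ := ⌈(n:ℝ)*(symD A + 2*σ)⌉₊ + 2*e + 1 with hg
  have hBstar : IsBstar g S' := by
    intro m
    have hsubset : (S' ×ˢ S').filter (fun p => p.1 + p.2 = m) ⊆
        (((S ×ˢ S).filter (fun p => p.1 + p.2 = m)) ∪
          ((E ×ˢ S').filter (fun p => p.1 + p.2 = m))) ∪
          ((S' ×ˢ E).filter (fun p => p.1 + p.2 = m)) := by
      intro p hp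
      simp only [Finset.mem_filter, Finset.mem_product, Finset.mem_union, hS'] at hp ⊢
      obtain ⟨⟨hp1, hp2⟩, hps⟩ := hp
      rcases hp1 with hp1 | hp1
      · rcases hp2 with hp2 | hp2
        · exact Or.inl (Or.inl ⟨⟨hp1, hp2⟩, hps⟩)
        · exact Or.inr ⟨⟨Or.inl hp1, hp2⟩, hps⟩
      · exact Or.inl (Or.inr ⟨⟨hp1, by tauto⟩, hps⟩)
    have hcard1 : ((S ×ˢ S).filter (fun p => p.1 + p.2 = m)).card ≤
        ⌈(n:ℝ)*(symD A + 2*σ)⌉₊ := by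
      have h1' := hc6 m
      have h2' : ((n:ℝ)*(symD A + 2*σ)) ≤ (⌈(n:ℝ)*(symD A + 2*σ)⌉₊ : ℝ) := Nat.le_ceil _
      exact_mod_cast le_trans h1' h2'
    have hcard2 : ((E ×ˢ S').filter (fun p => p.1 + p.2 = m)).card ≤ e := by
      rw [← hEcard]
      apply Finset.card_le_card_of_injOn (fun p => p.1)
      · intro p hp
        simp only [Finset.mem_coe, Finset.mem_filter, Finset.mem_product] at hp
        exact hp.1.1
      · rintro ⟨a, b⟩ hab ⟨a', b'⟩ hab' hfst
        simp only [Finset.mem_coe, Finset.mem_filter, Finset.mem_product] at hab hab'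
        simp only at hfst
        have : b = b' := by omega
        simp [hfst, this]
    have hcard3 : ((S' ×ˢ E).filter (fun p => p.1 + p.2 = m)).card ≤ e := by
      rw [← hEcard]
      apply Finset.card_le_card_of_injOn (fun p => p.2)
      · intro p hp
        simp only [Finset.mem_coe, Finset.mem_filter, Finset.mem_product] at hp
        exact hp.1.2
      · rintro ⟨a, b⟩ hab ⟨a', b'⟩ hab' hsnd
        simp only [Finset.mem_coe, Finset.mem_filter, Finset.mem_product] at hab hab'
        simp only at hsnd
        have : a = a' := by omega
        simp [hsnd, this]
    calc ((S' ×ˢ S').filter (fun p => p.1 + p.2 = m)).card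
        ≤ ((((S ×ˢ S).filter (fun p => p.1 + p.2 = m)) ∪
            ((E ×ˢ S').filter (fun p => p.1 + p.2 = m))) ∪
            ((S' ×ˢ E).filter (fun p => p.1 + p.2 = m))).card :=
          Finset.card_le_card hsubset
      _ ≤ (((S ×ˢ S).filter (fun p => p.1 + p.2 = m)) ∪
            ((E ×ˢ S').filter (fun p => p.1 + p.2 = m))).card +
            ((S' ×ˢ E).filter (fun p => p.1 + p.2 = m)).card := Finset.card_union_le _ _
      _ ≤ (((S ×ˢ S).filter (fun p => p.1 + p.2 = m)).card +
            ((E ×ˢ S').filter (fun p => p.1 + p.2 = m)).card) +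
            ((S' ×ˢ E).filter (fun p => p.1 + p.2 = m)).card := by
          gcongr
          exact Finset.card_union_le _ _
      _ ≤ g := by
          rw [hg]
          omega
  have hg1 : 1 ≤ g := by rw [hg]; omega
  have he_real : (e:ℝ) ≤ (n:ℝ)*σ + 2*(k:ℝ) + 1 := by
    by_cases hcase : ⌈(n:ℝ)*ε⌉₊ ≤ S.card
    · have he0 : e = 0 := by omega
      rw [he0]
      push_cast
      positivity
    · push_neg at hcase
      have hee : (e:ℝ) = (⌈(n:ℝ)*ε⌉₊:ℝ) - (S.card:ℝ) := by
        rw [he]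
        push_cast [Nat.cast_sub (le_of_lt hcase)]
        ring
      have hceil1 : (⌈(n:ℝ)*ε⌉₊:ℝ) < (n:ℝ)*ε + 1 := Nat.ceil_lt_add_one (by positivity)
      rw [hee]
      linarith
  have hg_real : (g:ℝ) ≤ (n:ℝ)*(symD A + δ) := by
    have hceil2 : (⌈(n:ℝ)*(symD A + 2*σ)⌉₊:ℝ) < (n:ℝ)*(symD A + 2*σ) + 1 :=
      Nat.ceil_lt_add_one (by positivity)
    have hgcast : (g:ℝ) = (⌈(n:ℝ)*(symD A + 2*σ)⌉₊:ℝ) + 2*(e:ℝ) + 1 := by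
      rw [hg]; push_cast; ring
    rw [hgcast, hσdef] at *
    nlinarith
  have hgn : g ≤ n := by
    have hlt : (g:ℝ) < (n:ℝ) := lt_of_le_of_lt hg_real (by nlinarith)
    exact_mod_cast hlt.le
  refine ⟨g, n, hg1, hgn, ?_, ?_⟩
  · have hRge := R_ge g n S' hS'sub hBstar
    have hcard' : ⌈(n:ℝ)*ε⌉₊ ≤ S'.card := by rw [hS'card]; omega
    calc (n:ℝ)*ε ≤ (⌈(n:ℝ)*ε⌉₊:ℝ) := Nat.le_ceil _
      _ ≤ (S'.card : ℝ) := by exact_mod_cast hcard'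
      _ ≤ (R g n : ℝ) := by exact_mod_cast hRge
  · rw [div_le_iff₀ hnR, mul_comm]
    exact hg_real


theorem delta_as_infimum (ε : ℝ) (h0 : 0 ≤ ε) (h1 : ε ≤ 1) :
    Delta ε = sInf {d : ℝ | ∃ g n : ℕ, 1 ≤ g ∧ g ≤ n ∧
      (n : ℝ) * ε ≤ (R g n : ℝ) ∧ d = (g : ℝ) / n} := by
  have hΓne : {d : ℝ | ∃ g n : ℕ, 1 ≤ g ∧ g ≤ n ∧
      (n : ℝ) * ε ≤ (R g n : ℝ) ∧ d = (g : ℝ) / n}.Nonempty := by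
    refine ⟨1, 1, 1, le_refl 1, le_refl 1, ?_, by norm_num⟩
    rw [R_one_one]; simpa using h1
  have hΓbdd : BddBelow {d : ℝ | ∃ g n : ℕ, 1 ≤ g ∧ g ≤ n ∧
      (n : ℝ) * ε ≤ (R g n : ℝ) ∧ d = (g : ℝ) / n} := by
    refine ⟨0, fun d hd => ?_⟩
    obtain ⟨g, n, -, -, -, rfl⟩ := hd
    positivity
  have hDne : {d : ℝ | ∃ A : Set ℝ, A ⊆ Set.Ico (0:ℝ) 1 ∧ MeasurableSet A ∧
      volume A = ENNReal.ofReal ε ∧ d = symD A}.Nonempty := by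
    refine ⟨symD (Set.Ico 0 ε), Set.Ico 0 ε, ?_, measurableSet_Ico, by simp [h0], rfl⟩
    exact Set.Ico_subset_Ico (le_refl 0) h1
  have hDbdd : BddBelow {d : ℝ | ∃ A : Set ℝ, A ⊆ Set.Ico (0:ℝ) 1 ∧ MeasurableSet A ∧
      volume A = ENNReal.ofReal ε ∧ d = symD A} := by
    refine ⟨0, fun d hd => ?_⟩
    obtain ⟨A, hA, -, -, rfl⟩ := hd
    exact symD_nonneg A hA
  apply le_antisymm
  · -- Delta ≤ sInf Γ
    apply le_csInf hΓne
    rintro d ⟨g, n, hg, hgn, hR, rfl⟩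
    obtain ⟨A, hA1, hA2, hA3, hA4⟩ := lemmaA ε h0 h1 g n hg hgn hR
    exact csInf_le_of_le hDbdd ⟨A, hA1, hA2, hA3, rfl⟩ hA4
  · -- sInf Γ ≤ Delta
    apply le_csInf hDne
    rintro d ⟨A, hA1, hA2, hA3, rfl⟩
    have : ∀ δ : ℝ, 0 < δ → sInf {d : ℝ | ∃ g n : ℕ, 1 ≤ g ∧ g ≤ n ∧
        (n : ℝ) * ε ≤ (R g n : ℝ) ∧ d = (g : ℝ) / n} ≤ symD A + δ := by
      intro δ hδ
      obtain ⟨g, n, hg, hgn, hR, hle⟩ := lemmaB ε h0 h1 A hA1 hA2 hA3 δ hδ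
      exact csInf_le_of_le hΓbdd ⟨g, n, hg, hgn, hR, rfl⟩ hle
    exact le_of_forall_pos_le_add this
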